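/- Let f : X → Y be a surjective group homomorphism admitting a homomorphic section s : Y → X with f ∘ s = id. Suppose there exist a group Z and a surjective homomorphism y : Z → Y such that, forming the pullback P = {(z, a) ∈ Z × X | y z = f a} with first projection φ : P → Z, the homomorphism φ is a trivial extension with respect to abelianization: the map P → {(z, c) ∈ Z × Abelianization P | η_Z z = (Abelianization.map φ) c}, p ↦ (φ p, η_P p), is a bijection, where η_G : G → Abelianization G denotes the canonical projection. Then f is itself a trivial extension: the map X → {(b, c) ∈ Y × Abelianization X | η_Y b = (Abelianization.map f) c}, a ↦ (f a, η_X a), is a bijection. -/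

import Mathlib

/-- A commutative square (with sides `φ, x` out of `P` and `y, f` into `Y`) is a pullback:
`p ↦ (φ p, x p)` is a bijection from `P` onto `{(z, a) ∈ Z × X | y z = f a}`. -/
def IsPB {P Z X Y : Type*} (φ : P → Z) (x : P → X) (y : Z → Y) (f : X → Y) : Prop :=
  Set.BijOn (fun p => (φ p, x p)) Set.univ {za : Z × X | y za.1 = f za.2}

/-- A homomorphism `g : A →* B` is a trivial extension (relative to abelianization) when
its naturality square with the abelianization units is a pullback, i.e.
`a ↦ (g a, η_A a)` is a bijection from `A` onto
`{(b, c) ∈ B × Abelianization A | η_B b = (Abelianization.map g) c}`. -/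
def IsTrivialExt {A B : Type*} [Group A] [Group B] (g : A →* B) : Prop :=
  IsPB (⇑g) (⇑(Abelianization.of (G := A))) (⇑(Abelianization.of (G := B)))
    (⇑(Abelianization.map g))

/-- Theorem 5.2 instantiated for groups and abelianization: a split surjective
homomorphism which becomes a trivial extension after pulling back along some surjection
(i.e. a split central extension) is itself a trivial extension. -/
theorem stmt_10 {X Y : Type*} [Group X] [Group Y] (f : X →* Y) (s : Y →* X)
    (hf : Function.Surjective f) (hs : f.comp s = MonoidHom.id Y)
    (hcentral : ∃ (Z : Type*) (_ : Group Z) (y : Z →* Y), Function.Surjective y ∧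
      IsTrivialExt ((MonoidHom.fst Z X).comp
        ((y.comp (MonoidHom.fst Z X)).eqLocus (f.comp (MonoidHom.snd Z X))).subtype)) :
    IsTrivialExt f := by
  obtain ⟨Z, _, y, hy, htriv⟩ := hcentral
  have hfs : ∀ b, f (s b) = b := fun b => DFunLike.congr_fun hs b
  -- Step 1: the kernel of f is central in X.
  have hcent : ∀ n, f n = 1 → ∀ x : X, n * x = x * n := by
    intro n hn x
    obtain ⟨z, hz⟩ := hy (f x)
    set P := ((y.comp (MonoidHom.fst Z X)).eqLocus (f.comp (MonoidHom.snd Z X))) with hP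
    have hp : ((z, x) : Z × X) ∈ P := by
      show (y.comp (MonoidHom.fst Z X)) (z, x) = (f.comp (MonoidHom.snd Z X)) (z, x)
      simpa using hz
    have hq : ((1, n) : Z × X) ∈ P := by
      show (y.comp (MonoidHom.fst Z X)) (1, n) = (f.comp (MonoidHom.snd Z X)) (1, n)
      simpa using hn.symm
    set p : P := ⟨(z, x), hp⟩
    set q : P := ⟨(1, n), hq⟩
    set φ := (MonoidHom.fst Z X).comp P.subtype with hφ
    open commutatorElement in
    have h1 : ⁅q, p⁆ = 1 := by
      apply htriv.injOn (Set.mem_univ ⁅q, p⁆) (Set.mem_univ 1)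
      have hφc : φ ⁅q, p⁆ = φ (1 : P) := by
        rw [map_commutatorElement, map_one]
        have : φ q = 1 := rfl
        rw [this, commutatorElement_def, one_mul, inv_one, mul_one, mul_inv_cancel]
      have hoc : Abelianization.of ⁅q, p⁆ = Abelianization.of (1 : P) := by
        rw [map_commutatorElement, map_one]
        exact commutatorElement_eq_one_iff_mul_comm.mpr (mul_comm _ _)
      exact Prod.ext hφc hoc
    have h2 := congrArg (fun r : P => (r : Z × X).2) h1
    simp only [commutatorElement_def] at h2
    have h2' : n * x * n⁻¹ * x⁻¹ = 1 := h2
    calc n * x = (n * x * n⁻¹ * x⁻¹) * (x * n) := by group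
    _ = x * n := by rw [h2', one_mul]
  -- Step 2: the retraction `x ↦ x * s (f x)⁻¹` is a homomorphism into the center.
  have hker_center : ∀ x : X, x * (s (f x))⁻¹ ∈ Subgroup.center X := by
    intro x
    rw [Subgroup.mem_center_iff]
    intro g
    exact (hcent _ (by simp [hfs]) g).symm
  let d : X →* Subgroup.center X :=
    { toFun := fun x => ⟨x * (s (f x))⁻¹, hker_center x⟩
      map_one' := by ext; simp
      map_mul' := by
        intro a b
        ext
        show (a * b) * (s (f (a * b)))⁻¹ = (a * (s (f a))⁻¹) * (b * (s (f b))⁻¹)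
        have hu : f (b * (s (f b))⁻¹) = 1 := by
          rw [map_mul, map_inv, hfs, mul_inv_cancel]
        have hc := hcent _ hu ((s (f a))⁻¹)
        rw [map_mul, map_mul, mul_inv_rev, mul_assoc a (s (f a))⁻¹, ← hc]
        group }
  -- Step 3: elements of the commutator subgroup in the kernel of f are trivial.
  have hkill : ∀ n : X, f n = 1 → Abelianization.of n = 1 → n = 1 := by
    intro n hn hon
    have hmem : n ∈ commutator X := by
      rwa [← QuotientGroup.eq_one_iff (G := X) (N := commutator X)]
    open IsMulCommutative in
    have hd : d n = 1 := Abelianization.commutator_subset_ker d hmem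
    have : n * (s (f n))⁻¹ = 1 := congrArg Subtype.val hd
    rwa [hn, map_one, inv_one, mul_one] at this
  refine ⟨?_, ?_, ?_⟩
  · -- maps to
    intro a _
    show Abelianization.of (f a) = Abelianization.map f (Abelianization.of a)
    simp [Abelianization.map_of]
  · -- injective
    intro a1 _ a2 _ h
    have h1 : f a1 = f a2 := congrArg Prod.fst h
    have h2 : Abelianization.of a1 = Abelianization.of a2 := congrArg Prod.snd h
    have h3 := hkill (a1 * a2⁻¹) (by simp [h1]) (by simp [h2])
    calc a1 = (a1 * a2⁻¹) * a2 := (inv_mul_cancel_right a1 a2).symm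
    _ = a2 := by rw [h3, one_mul]
  · -- surjective
    rintro ⟨b, c⟩ hbc
    obtain ⟨a0, ha0⟩ : ∃ a0, Abelianization.of a0 = c := by
      rcases c.exists_rep with ⟨a0, ha0⟩
      exact ⟨a0, ha0⟩
    have hbc' : Abelianization.of b = Abelianization.map f c := hbc
    refine ⟨a0 * s ((f a0)⁻¹ * b), Set.mem_univ _, ?_⟩
    have hfa : f (a0 * s ((f a0)⁻¹ * b)) = b := by simp [hfs]
    have hw : Abelianization.of ((f a0)⁻¹ * b) = 1 := by
      rw [map_mul, map_inv, hbc', ← ha0, Abelianization.map_of, inv_mul_cancel]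
    have hoa : Abelianization.of (a0 * s ((f a0)⁻¹ * b)) = c := by
      rw [map_mul, ← ha0]
      have : Abelianization.of (s ((f a0)⁻¹ * b)) =
          Abelianization.map s (Abelianization.of ((f a0)⁻¹ * b)) := by
        simp [Abelianization.map_of]
      rw [this, hw, map_one, mul_one]
    exact Prod.ext hfa hoa
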